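/- Let X be a Banach space, let (T_n) ⊂ X × X* be a sequence of nonempty operators, let T := liminf T_n, and let (x, x*) ∈ T. If (x_n, x_n*) → (x, x*) strongly in X × X*, then liminf_n φ_{T_n}(x_n, x_n*) ≥ φ_T(x, x*), where φ_S denotes the Fitzpatrick function of S. -/

import Mathlib

open Filter Topology
noncomputable section
variable {X : Type*} [NormedAddCommGroup X] [NormedSpace ℝ X]

def pairing (p : X × StrongDual ℝ X) : ℝ := p.2 p.1

def ConvexERealOn {E : Type*} [AddCommGroup E] [Module ℝ E] (f : E → EReal) : Prop :=
  ∀ x y : E, ∀ a b : ℝ, 0 ≤ a → 0 ≤ b → a + b = 1 →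
    f (a • x + b • y) ≤ (a : EReal) * f x + (b : EReal) * f y

def IsGamma {E : Type*} [AddCommGroup E] [Module ℝ E] [TopologicalSpace E] (f : E → EReal) : Prop :=
  LowerSemicontinuous f ∧ ConvexERealOn f ∧ ∀ x, f x ≠ ⊥

def EpiConverges {E : Type*} [TopologicalSpace E] (fs : ℕ → E → EReal) (f : E → EReal) : Prop :=
  ∀ z : E,
    (∃ zs : ℕ → E, Tendsto zs atTop (nhds z) ∧
      Tendsto (fun n => fs n (zs n)) atTop (nhds (f z))) ∧
    (∀ zs : ℕ → E, Tendsto zs atTop (nhds z) →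
      f z ≤ Filter.liminf (fun n => fs n (zs n)) atTop)

def conjFn (f : X × StrongDual ℝ X → EReal) (q : StrongDual ℝ X × X) : EReal :=
  ⨆ p : X × StrongDual ℝ X, (((q.1 p.1 + p.2 q.2 : ℝ) : EReal) - f p)

def Lset (f : X × StrongDual ℝ X → EReal) : Set (X × StrongDual ℝ X) :=
  {p | f p = (pairing p : EReal)}

def MonotoneSet (T : Set (X × StrongDual ℝ X)) : Prop :=
  ∀ p ∈ T, ∀ q ∈ T, 0 ≤ (q.2 - p.2) (q.1 - p.1)

def MaximalMonotone (T : Set (X × StrongDual ℝ X)) : Prop :=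
  MonotoneSet T ∧ ∀ S : Set (X × StrongDual ℝ X), MonotoneSet S → T ⊆ S → S = T

def OpLiminf (Ts : ℕ → Set (X × StrongDual ℝ X)) : Set (X × StrongDual ℝ X) :=
  {p | ∃ zs : ℕ → X × StrongDual ℝ X, (∀ n, zs n ∈ Ts n) ∧ Tendsto zs atTop (nhds p)}

def fitz (T : Set (X × StrongDual ℝ X)) (p : X × StrongDual ℝ X) : EReal :=
  ⨆ q ∈ T, (((p.2 - q.2) (q.1 - p.1) + p.2 p.1 : ℝ) : EReal)

open Classical in
def indic (T : Set (X × StrongDual ℝ X)) (p : X × StrongDual ℝ X) : EReal :=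
  if p ∈ T then 0 else ⊤

def IsRepFunOf (g : X × StrongDual ℝ X → EReal) (T : Set (X × StrongDual ℝ X)) : Prop :=
  IsGamma g ∧ (∀ p, (pairing p : EReal) ≤ g p) ∧ ∀ p, (g p = (pairing p : EReal) ↔ p ∈ T)

def IsReflexive (X : Type*) [NormedAddCommGroup X] [NormedSpace ℝ X] : Prop :=
  Function.Surjective (NormedSpace.inclusionInDoubleDual ℝ X)

def WeakTendstoProd (zs : ℕ → X × StrongDual ℝ X) (z : X × StrongDual ℝ X) : Prop :=
  (∀ g : StrongDual ℝ X, Tendsto (fun n => g (zs n).1) atTop (nhds (g z.1))) ∧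
  (∀ G : StrongDual ℝ (StrongDual ℝ X),
    Tendsto (fun n => G (zs n).2) atTop (nhds (G z.2)))

def MoscoConverges (fs : ℕ → X × StrongDual ℝ X → EReal)
    (f : X × StrongDual ℝ X → EReal) : Prop :=
  ∀ z : X × StrongDual ℝ X,
    (∃ zs : ℕ → X × StrongDual ℝ X, Tendsto zs atTop (nhds z) ∧
      Tendsto (fun n => fs n (zs n)) atTop (nhds (f z))) ∧
    (∀ zs : ℕ → X × StrongDual ℝ X, WeakTendstoProd zs z →
      f z ≤ Filter.liminf (fun n => fs n (zs n)) atTop)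

def Tset (h : X × StrongDual ℝ X → EReal) : Set (X × StrongDual ℝ X) :=
  {p | ((2 * pairing p : ℝ) : EReal) = h p + conjFn h (p.2, p.1)}

/-- For nonempty operators `T_n`, `T := liminf T_n`, `(x,x*) ∈ T` and
`(x_n,x_n*) → (x,x*)` strongly, one has `liminf φ_{T_n}(x_n,x_n*) ≥ φ_T(x,x*)`. -/
theorem stmt11 [CompleteSpace X]
    (Ts : ℕ → Set (X × StrongDual ℝ X))
    (hne : ∀ n, (Ts n).Nonempty)
    (p : X × StrongDual ℝ X) (hp : p ∈ OpLiminf Ts)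
    (zs : ℕ → X × StrongDual ℝ X) (hzs : Tendsto zs atTop (nhds p)) :
    fitz (OpLiminf Ts) p ≤ Filter.liminf (fun n => fitz (Ts n) (zs n)) atTop := by
  rw [fitz]
  refine iSup₂_le fun q hq => ?_
  obtain ⟨ws, hwmem, hwt⟩ := hq
  -- componentwise convergence
  have hz1 : Tendsto (fun n => (zs n).1) atTop (nhds p.1) :=
    (continuous_fst.tendsto p).comp hzs
  have hz2 : Tendsto (fun n => (zs n).2) atTop (nhds p.2) :=
    (continuous_snd.tendsto p).comp hzs
  have hw1 : Tendsto (fun n => (ws n).1) atTop (nhds q.1) :=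
    (continuous_fst.tendsto q).comp hwt
  have hw2 : Tendsto (fun n => (ws n).2) atTop (nhds q.2) :=
    (continuous_snd.tendsto q).comp hwt
  set val : ℕ → ℝ := fun n => ((zs n).2 - (ws n).2) ((ws n).1 - (zs n).1) + (zs n).2 (zs n).1
    with hval
  have hev : ∀ {A : ℕ → StrongDual ℝ X} {b : ℕ → X} {A₀ : StrongDual ℝ X} {b₀ : X},
      Tendsto A atTop (nhds A₀) → Tendsto b atTop (nhds b₀) →
      Tendsto (fun n => A n (b n)) atTop (nhds (A₀ b₀)) := by
    intro A b A₀ b₀ hA hb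
    exact (isBoundedBilinearMap_apply.continuous.tendsto (A₀, b₀)).comp (hA.prodMk_nhds hb)
  have hvt : Tendsto val atTop (nhds ((p.2 - q.2) (q.1 - p.1) + p.2 p.1)) :=
    (hev (hz2.sub hw2) (hw1.sub hz1)).add (hev hz2 hz1)
  have hvt' : Tendsto (fun n => ((val n : ℝ) : EReal)) atTop
      (nhds (((p.2 - q.2) (q.1 - p.1) + p.2 p.1 : ℝ) : EReal)) :=
    EReal.tendsto_coe.2 hvt
  have hle : ∀ n, ((val n : ℝ) : EReal) ≤ fitz (Ts n) (zs n) := fun n =>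
    le_iSup₂_of_le (ws n) (hwmem n) le_rfl
  calc (((p.2 - q.2) (q.1 - p.1) + p.2 p.1 : ℝ) : EReal)
      = Filter.liminf (fun n => ((val n : ℝ) : EReal)) atTop := (hvt'.liminf_eq).symm
    _ ≤ Filter.liminf (fun n => fitz (Ts n) (zs n)) atTop :=
        Filter.liminf_le_liminf (Filter.Eventually.of_forall hle)
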